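/- Let p > 2, p′ = p/(p−1), a > 0 and 0 ≤ b ≤ p − 1, and let h be the Legendre transform of f(s,t) = (a/p)(|s|^p + 2b|s|^{p/2}|t|^{p/2} + |t|^p). Then for every real s̄ one has h(s̄, s̄) = (2/p′) · ( a(1+b) )^{1−p′} |s̄|^{p′}. -/

import Mathlib

open Real

lemma jensen2 {A B k : ℝ} (hA : 0 ≤ A) (hB : 0 ≤ B) (hk : 1 ≤ k) :
    ((A + B) / 2) ^ k ≤ (A ^ k + B ^ k) / 2 := by
  have h := Real.rpow_arith_mean_le_arith_mean_rpow (Finset.univ : Finset (Fin 2))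
    ![1/2, 1/2] ![A, B] (by intro i _; fin_cases i <;> norm_num)
    (by simp [Fin.sum_univ_succ]; norm_num) (by intro i _; fin_cases i <;> simpa) hk
  simp [Fin.sum_univ_succ] at h
  calc ((A + B) / 2) ^ k = (2⁻¹ * A + 2⁻¹ * B) ^ k := by ring_nf
    _ ≤ 2⁻¹ * A ^ k + 2⁻¹ * B ^ k := h
    _ = (A ^ k + B ^ k) / 2 := by ring

lemma cosh_rpow_le {k : ℝ} (hk : 1 ≤ k) (τ : ℝ) : (cosh τ) ^ k ≤ cosh (k * τ) := by
  rw [Real.cosh_eq, Real.cosh_eq]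
  have h := jensen2 (exp_nonneg τ) (exp_nonneg (-τ)) hk
  rw [← Real.exp_mul, ← Real.exp_mul] at h
  calc ((exp τ + exp (-τ)) / 2) ^ k ≤ (exp (τ * k) + exp (-τ * k)) / 2 := h
    _ = (exp (k * τ) + exp (-(k * τ))) / 2 := by ring_nf

lemma Phi_nonneg {p : ℝ} (hp : 2 ≤ p) {τ : ℝ} (hτ : 0 ≤ τ) :
    p * sinh τ * cosh τ ^ (p - 1) ≤ sinh (p * τ) := by
  set D : ℝ → ℝ := fun x => sinh (p * x) * cosh x ^ (-p) - p * (sinh x / cosh x) with hD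
  have hder : ∀ x : ℝ, HasDerivAt D
      ((cosh (p * x) * p) * cosh x ^ (-p)
        + sinh (p * x) * (sinh x * (-p) * cosh x ^ (-p - 1))
        - p * ((cosh x * cosh x - sinh x * cosh x * 0 - sinh x * sinh x) / (cosh x) ^ 2)) x := by
    intro x
    have h1 : HasDerivAt (fun x : ℝ => sinh (p * x)) (cosh (p * x) * p) x :=
      (Real.hasDerivAt_sinh (p * x)).comp x (by simpa using (hasDerivAt_id x).const_mul p)
    have h2 : HasDerivAt (fun x : ℝ => cosh x ^ (-p)) (sinh x * (-p) * cosh x ^ (-p - 1)) x :=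
      (Real.hasDerivAt_cosh x).rpow_const (Or.inl (Real.cosh_pos x).ne')
    have h3 : HasDerivAt (fun x : ℝ => sinh x / cosh x)
        ((cosh x * cosh x - sinh x * cosh x * 0 - sinh x * sinh x) / (cosh x) ^ 2) x := by
      have := (Real.hasDerivAt_sinh x).div (Real.hasDerivAt_cosh x) (Real.cosh_pos x).ne'
      exact this.congr_deriv (by ring)
    exact ((h1.mul h2).sub (h3.const_mul p))
  have hd_nonneg : ∀ x : ℝ, 0 ≤ deriv D x := by
    intro x
    rw [(hder x).deriv]
    have hc := Real.cosh_pos x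
    have key : cosh x ^ (p - 1) ≤ cosh ((p - 1) * x) := cosh_rpow_le (by linarith) x
    have e1 : cosh x * cosh x - sinh x * cosh x * 0 - sinh x * sinh x = 1 := by
      have := Real.cosh_sq_sub_sinh_sq x
      nlinarith [this]
    rw [e1]
    have e2 : cosh x ^ (-p : ℝ) = cosh x ^ (-p - 1 : ℝ) * cosh x := by
      have h := Real.rpow_add hc (-p - 1) 1
      rw [Real.rpow_one] at h
      rw [← h]; congr 1; ring
    have e3 : cosh (p * x) * cosh x - sinh (p * x) * sinh x = cosh ((p - 1) * x) := by
      rw [← Real.cosh_sub]; ring_nf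
    have e4 : cosh x ^ (-p - 1 : ℝ) * cosh x ^ (p - 1 : ℝ) = (cosh x ^ 2)⁻¹ := by
      rw [← Real.rpow_add hc, show (-p - 1 + (p - 1) : ℝ) = -((2:ℕ) : ℝ) by push_cast; ring,
        Real.rpow_neg hc.le, Real.rpow_natCast]
    have hpos : (0:ℝ) < cosh x ^ (-p - 1 : ℝ) := Real.rpow_pos_of_pos hc _
    calc (0:ℝ) = p * (cosh x ^ (-p - 1 : ℝ) * cosh x ^ (p - 1 : ℝ) - (cosh x ^ 2)⁻¹) := by
          rw [e4]; ring
      _ ≤ p * (cosh x ^ (-p - 1 : ℝ) * cosh ((p - 1) * x) - (cosh x ^ 2)⁻¹) := by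
          have : cosh x ^ (-p - 1 : ℝ) * cosh x ^ (p - 1 : ℝ)
              ≤ cosh x ^ (-p - 1 : ℝ) * cosh ((p - 1) * x) :=
            mul_le_mul_of_nonneg_left key hpos.le
          nlinarith
      _ = cosh (p * x) * p * cosh x ^ (-p)
          + sinh (p * x) * (sinh x * (-p) * cosh x ^ (-p - 1)) - p * (1 / cosh x ^ 2) := by
          rw [e2, ← e3]; field_simp; ring
  have hmono : Monotone D :=
    monotone_of_deriv_nonneg (fun x => (hder x).differentiableAt) hd_nonneg
  have hD0 : D 0 = 0 := by simp [hD]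
  have h0 : 0 ≤ D τ := hD0 ▸ hmono hτ
  have hc := Real.cosh_pos τ
  rw [hD] at h0
  simp only [sub_nonneg] at h0
  have := mul_le_mul_of_nonneg_right h0 (Real.rpow_pos_of_pos hc p).le
  calc p * sinh τ * cosh τ ^ (p - 1) = p * (sinh τ / cosh τ) * cosh τ ^ p := by
        have h := Real.rpow_add hc (p - 1) 1
        rw [Real.rpow_one] at h
        rw [show (p:ℝ) = p - 1 + 1 by ring, h]
        field_simp; ring
    _ ≤ sinh (p * τ) * cosh τ ^ (-p) * cosh τ ^ p := this
    _ = sinh (p * τ) := by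
        rw [mul_assoc, ← Real.rpow_add hc]; simp

lemma cosh_rpow_bound {p : ℝ} (hp : 2 ≤ p) {τ : ℝ} (hτ : 0 ≤ τ) :
    p * cosh τ ^ p ≤ cosh (p * τ) + (p - 1) := by
  set ψ : ℝ → ℝ := fun x => cosh (p * x) - p * cosh x ^ p with hψdef
  have hder : ∀ x : ℝ, HasDerivAt ψ
      (sinh (p * x) * p - p * (sinh x * p * cosh x ^ (p - 1))) x := by
    intro x
    have h1 : HasDerivAt (fun x : ℝ => cosh (p * x)) (sinh (p * x) * p) x :=
      (Real.hasDerivAt_cosh (p * x)).comp x (by simpa using (hasDerivAt_id x).const_mul p)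
    have h2 : HasDerivAt (fun x : ℝ => cosh x ^ p) (sinh x * p * cosh x ^ (p - 1)) x :=
      (Real.hasDerivAt_cosh x).rpow_const (Or.inl (Real.cosh_pos x).ne')
    exact h1.sub (h2.const_mul p)
  have hmono : MonotoneOn ψ (Set.Ici (0:ℝ)) := by
    apply monotoneOn_of_deriv_nonneg (convex_Ici 0)
      ((Differentiable.continuous (fun x => (hder x).differentiableAt)).continuousOn)
      (fun x _ => ((hder x).differentiableAt).differentiableWithinAt)
    intro x hx
    rw [interior_Ici] at hx
    rw [(hder x).deriv]
    have := Phi_nonneg hp (le_of_lt hx)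
    nlinarith [this]
  have h0 : ψ 0 ≤ ψ τ := hmono (by simp) hτ hτ
  simp only [hψdef, mul_zero, Real.cosh_zero, Real.one_rpow] at h0
  linarith

lemma two_rpow_bound {p : ℝ} (hp : 2 ≤ p) : p * 2 ^ (1 - p) ≤ 1 := by
  have hb := one_add_mul_self_le_rpow_one_add (by norm_num : (-1:ℝ) ≤ 1)
    (by linarith : 1 ≤ p - 1)
  -- 1 + (p-1)*1 ≤ (1+1)^(p-1)
  have h2 : (0:ℝ) < 2 ^ (1 - p) := Real.rpow_pos_of_pos two_pos _
  have key : p * 2 ^ (1 - p) ≤ (2:ℝ) ^ (p - 1) * 2 ^ (1 - p) := by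
    apply mul_le_mul_of_nonneg_right _ h2.le
    calc p = 1 + (p - 1) * 1 := by ring
      _ ≤ (1 + 1) ^ (p - 1) := hb
      _ = (2:ℝ) ^ (p - 1) := by norm_num
  calc p * 2 ^ (1 - p) ≤ (2:ℝ) ^ (p - 1) * 2 ^ (1 - p) := key
    _ = 1 := by rw [← Real.rpow_add two_pos]; norm_num

lemma KB_aux {p : ℝ} (hp : 2 < p) {u v : ℝ} (hu : 0 < u) (hv : 0 < v) (huv : v ≤ u) :
    p * 2 ^ (1 - p) * (u + v) ^ p ≤ u ^ p + v ^ p + 2 * (p - 1) * (u ^ (p/2) * v ^ (p/2)) := by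
  set μ : ℝ := (log u + log v) / 2 with hμ
  set τ : ℝ := (log u - log v) / 2 with hτdef
  have hτ : 0 ≤ τ := by
    have := Real.log_le_log hv huv
    rw [hτdef]; linarith
  have hue : u = exp (μ + τ) := by
    rw [hμ, hτdef, show (log u + log v) / 2 + (log u - log v) / 2 = log u by ring,
      Real.exp_log hu]
  have hve : v = exp (μ - τ) := by
    rw [hμ, hτdef, show (log u + log v) / 2 - (log u - log v) / 2 = log v by ring,
      Real.exp_log hv]
  have e1 : u ^ p = exp (μ * p) * exp (p * τ) := by
    rw [hue, ← Real.exp_mul, ← Real.exp_add]; ring_nf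
  have e2 : v ^ p = exp (μ * p) * exp (-(p * τ)) := by
    rw [hve, ← Real.exp_mul, ← Real.exp_add]; ring_nf
  have e3 : u ^ (p/2) * v ^ (p/2) = exp (μ * p) := by
    rw [hue, hve, ← Real.exp_mul, ← Real.exp_mul, ← Real.exp_add]; ring_nf
  have e4 : (u + v) ^ p = exp (μ * p) * (2 ^ p * cosh τ ^ p) := by
    have huv2 : u + v = exp μ * (2 * cosh τ) := by
      rw [hue, hve, Real.cosh_eq, show μ - τ = μ + (-τ) by ring, Real.exp_add, Real.exp_add]
      ring
    rw [huv2, Real.mul_rpow (exp_pos μ).le (by positivity),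
      Real.mul_rpow (by norm_num) (Real.cosh_pos τ).le, ← Real.exp_mul]
  have key := cosh_rpow_bound hp.le hτ
  have hcosh : exp (p * τ) + exp (-(p * τ)) = 2 * cosh (p * τ) := by
    rw [Real.cosh_eq]; ring
  have hexp : (0:ℝ) < exp (μ * p) := exp_pos _
  have h2p : (0:ℝ) < (2:ℝ) ^ p := Real.rpow_pos_of_pos two_pos _
  have e5 : p * 2 ^ (1 - p) * (2:ℝ) ^ p = 2 * p := by
    rw [mul_assoc, ← Real.rpow_add two_pos]
    norm_num
    ring
  calc p * 2 ^ (1 - p) * (u + v) ^ p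
      = exp (μ * p) * (2 * (p * cosh τ ^ p)) := by
        rw [e4, show exp (μ * p) * (2 * (p * cosh τ ^ p))
          = p * 2 ^ (1 - p) * 2 ^ p * (exp (μ * p) * cosh τ ^ p) by rw [e5]; ring]
        ring
    _ ≤ exp (μ * p) * (2 * (cosh (p * τ) + (p - 1))) := by
        apply mul_le_mul_of_nonneg_left _ hexp.le
        linarith [key]
    _ = u ^ p + v ^ p + 2 * (p - 1) * (u ^ (p/2) * v ^ (p/2)) := by
        rw [e1, e2, e3, Real.cosh_eq]; ring

lemma KB {p : ℝ} (hp : 2 < p) {u v : ℝ} (hu : 0 ≤ u) (hv : 0 ≤ v) :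
    p * 2 ^ (1 - p) * (u + v) ^ p ≤ u ^ p + v ^ p + 2 * (p - 1) * (u ^ (p/2) * v ^ (p/2)) := by
  have hp0 : p ≠ 0 := by linarith
  have hp20 : p / 2 ≠ 0 := by positivity
  have hbd := two_rpow_bound hp.le
  rcases eq_or_lt_of_le hu with rfl | hu'
  · simp [Real.zero_rpow hp0, Real.zero_rpow hp20]
    calc p * 2 ^ (1 - p) * v ^ p ≤ 1 * v ^ p := by
          apply mul_le_mul_of_nonneg_right hbd (Real.rpow_nonneg hv p)
      _ = v ^ p := by ring
  rcases eq_or_lt_of_le hv with rfl | hv'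
  · simp [Real.zero_rpow hp0, Real.zero_rpow hp20]
    calc p * 2 ^ (1 - p) * u ^ p ≤ 1 * u ^ p := by
          apply mul_le_mul_of_nonneg_right hbd (Real.rpow_nonneg hu p)
      _ = u ^ p := by ring
  rcases le_total v u with hvu | huv
  · exact KB_aux hp hu' hv' hvu
  · have := KB_aux hp hv' hu' huv
    calc p * 2 ^ (1 - p) * (u + v) ^ p = p * 2 ^ (1 - p) * (v + u) ^ p := by ring_nf
      _ ≤ v ^ p + u ^ p + 2 * (p - 1) * (v ^ (p/2) * u ^ (p/2)) := this
      _ = u ^ p + v ^ p + 2 * (p - 1) * (u ^ (p/2) * v ^ (p/2)) := by ring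

lemma K0 {p : ℝ} (hp : 2 < p) {u v : ℝ} (hu : 0 ≤ u) (hv : 0 ≤ v) :
    2 ^ (1 - p) * (u + v) ^ p ≤ u ^ p + v ^ p := by
  have hj := jensen2 hu hv (by linarith : (1:ℝ) ≤ p)
  have e : (u + v) ^ p = 2 ^ p * ((u + v)/2) ^ p := by
    rw [← Real.mul_rpow (by norm_num) (by positivity)]
    congr 1; ring
  have e2 : (2:ℝ) ^ (1 - p) * 2 ^ p = 2 := by
    rw [← Real.rpow_add two_pos]; norm_num
  calc 2 ^ (1 - p) * (u + v) ^ p = 2 * ((u + v)/2) ^ p := by rw [e, ← mul_assoc, e2]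
    _ ≤ u ^ p + v ^ p := by linarith [hj]

lemma KI {p b : ℝ} (hp : 2 < p) (hb0 : 0 ≤ b) (hb1 : b ≤ p - 1) {u v : ℝ}
    (hu : 0 ≤ u) (hv : 0 ≤ v) :
    (1 + b) * 2 ^ (1 - p) * (u + v) ^ p
      ≤ u ^ p + 2 * b * (u ^ (p/2) * v ^ (p/2)) + v ^ p := by
  have h0 := K0 hp hu hv
  have h1 := KB hp hu hv
  have ha' : (0:ℝ) ≤ p - 1 - b := by linarith
  have t0 : 0 ≤ (p - 1 - b) * (u ^ p + v ^ p - 2 ^ (1 - p) * (u + v) ^ p) :=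
    mul_nonneg ha' (by linarith)
  have t1 : 0 ≤ b * (u ^ p + v ^ p + 2 * (p - 1) * (u ^ (p/2) * v ^ (p/2))
      - p * 2 ^ (1 - p) * (u + v) ^ p) := mul_nonneg hb0 (by linarith)
  nlinarith [t0, t1]

lemma young_step {p p' A z M : ℝ} (hp : 2 < p) (hp' : p' = p / (p - 1)) (hA : 0 < A)
    (hz : 0 ≤ z) (hM : 0 ≤ M) :
    z * M ≤ A / p * z ^ p + 1 / p' * A ^ (1 - p') * M ^ p' := by
  have hp1 : (1:ℝ) < p := by linarith
  have hpm : p - 1 ≠ 0 := by intro h; rw [sub_eq_zero] at h; linarith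
  have hp0 : p ≠ 0 := by linarith
  have conj : p.HolderConjugate p' := (Real.holderConjugate_iff_eq_conjExponent hp1).2 hp'
  have hy := Real.young_inequality_of_nonneg
    (mul_nonneg (Real.rpow_nonneg hA.le (1/p)) hz)
    (mul_nonneg (Real.rpow_nonneg hA.le (-(1/p))) hM) conj
  have hab : A ^ (1/p : ℝ) * z * (A ^ (-(1/p) : ℝ) * M) = z * M := by
    rw [show A ^ (1/p : ℝ) * z * (A ^ (-(1/p) : ℝ) * M)
      = A ^ (1/p : ℝ) * A ^ (-(1/p) : ℝ) * (z * M) by ring, ← Real.rpow_add hA]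
    simp
  have hap : (A ^ (1/p : ℝ) * z) ^ p = A * z ^ p := by
    rw [Real.mul_rpow (Real.rpow_nonneg hA.le _) hz, ← Real.rpow_mul hA.le]
    rw [show (1/p) * p = 1 by field_simp, Real.rpow_one]
  have hbp : (A ^ (-(1/p) : ℝ) * M) ^ p' = A ^ (1 - p' : ℝ) * M ^ p' := by
    have hexp : (-(1/p)) * p' = 1 - p' := by rw [hp']; field_simp; ring
    rw [Real.mul_rpow (Real.rpow_nonneg hA.le _) hM, ← Real.rpow_mul hA.le, hexp]
  rw [hab, hap, hbp] at hy
  calc z * M ≤ A * z ^ p / p + A ^ (1 - p') * M ^ p' / p' := hy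
    _ = A / p * z ^ p + 1 / p' * A ^ (1 - p') * M ^ p' := by ring

lemma upper_bound {p p' a b : ℝ} (hp : 2 < p) (hp' : p' = p / (p - 1)) (ha : 0 < a)
    (hb0 : 0 ≤ b) (hb1 : b ≤ p - 1) (sb s t : ℝ) :
    s * sb + t * sb - (a / p) * (|s| ^ p + 2 * b * |s| ^ (p / 2) * |t| ^ (p / 2) + |t| ^ p)
      ≤ (2 / p') * (a * (1 + b)) ^ (1 - p') * |sb| ^ p' := by
  set u := |s| with hu
  set v := |t| with hv
  set M := |sb| with hM
  have hu0 : 0 ≤ u := abs_nonneg s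
  have hv0 : 0 ≤ v := abs_nonneg t
  have hM0 : 0 ≤ M := abs_nonneg sb
  have hA : 0 < a * (1 + b) := by nlinarith
  have step1 : s * sb + t * sb ≤ (u + v) * M := by
    have h1 : s * sb ≤ u * M := by
      calc s * sb ≤ |s * sb| := le_abs_self _
        _ = u * M := abs_mul s sb
    have h2 : t * sb ≤ v * M := by
      calc t * sb ≤ |t * sb| := le_abs_self _
        _ = v * M := abs_mul t sb
    linarith
  have step2 := KI hp hb0 hb1 hu0 hv0
  have step3 := young_step (A := a * (1 + b)) (z := (u + v)/2) hp hp' hA (by positivity) hM0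
  have ehalf : ((u + v)/2) ^ p = 2 ^ (1 - p) * (u + v) ^ p / 2 := by
    rw [Real.div_rpow (by positivity) (by norm_num)]
    rw [show (1 - p : ℝ) = 1 + (-p) by ring, Real.rpow_add two_pos, Real.rpow_one,
      Real.rpow_neg (by norm_num : (0:ℝ) ≤ 2)]
    field_simp
  have hap : 0 < a / p := by positivity
  -- (a/p) * f-body ≥ (a/p) * (1+b) * 2^(1-p) * (u+v)^p
  have step4 : (a / p) * ((1 + b) * 2 ^ (1 - p) * (u + v) ^ p)
      ≤ (a / p) * (u ^ p + 2 * b * u ^ (p/2) * v ^ (p/2) + v ^ p) := by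
    apply mul_le_mul_of_nonneg_left _ hap.le
    calc (1 + b) * 2 ^ (1 - p) * (u + v) ^ p
        ≤ u ^ p + 2 * b * (u ^ (p/2) * v ^ (p/2)) + v ^ p := step2
      _ = u ^ p + 2 * b * u ^ (p/2) * v ^ (p/2) + v ^ p := by ring
  -- combine
  have key : (u + v) * M ≤ (a / p) * ((1 + b) * 2 ^ (1 - p) * (u + v) ^ p)
      + (2 / p') * (a * (1 + b)) ^ (1 - p') * M ^ p' := by
    have h := step3
    rw [ehalf] at h
    have e6 : a / p * ((1 + b) * 2 ^ (1 - p) * (u + v) ^ p)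
        = 2 * (a * (1 + b) / p * (2 ^ (1 - p) * (u + v) ^ p / 2)) := by ring
    have e7 : (2 / p') * (a * (1 + b)) ^ (1 - p') * M ^ p'
        = 2 * (1 / p' * (a * (1 + b)) ^ (1 - p') * M ^ p') := by ring
    have e8 : (u + v) * M = 2 * ((u + v) / 2 * M) := by ring
    linarith [h]
  linarith [step1, step4, key]

lemma attain {p p' a b : ℝ} (hp : 2 < p) (hp' : p' = p / (p - 1)) (ha : 0 < a)
    (hb0 : 0 ≤ b) (sb : ℝ) :
    ∃ s₀ : ℝ,
      s₀ * sb + s₀ * sb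
        - (a / p) * (|s₀| ^ p + 2 * b * |s₀| ^ (p / 2) * |s₀| ^ (p / 2) + |s₀| ^ p)
      = (2 / p') * (a * (1 + b)) ^ (1 - p') * |sb| ^ p' := by
  have hpm : (0:ℝ) < p - 1 := by linarith
  have hp0 : p ≠ 0 := by linarith
  have hp'0 : p' ≠ 0 := by rw [hp']; positivity
  have hA : 0 < a * (1 + b) := by nlinarith
  set A := a * (1 + b) with hAdef
  set M := |sb| with hMdef
  have hM0 : 0 ≤ M := abs_nonneg sb
  set r : ℝ := (M / A) ^ (1 / (p - 1) : ℝ) with hrdef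
  have hr0 : 0 ≤ r := Real.rpow_nonneg (by positivity) _
  refine ⟨if sb < 0 then -r else r, ?_⟩
  have habs : |if sb < 0 then -r else r| = r := by
    split_ifs <;> simp [abs_of_nonneg hr0]
  have hssb : (if sb < 0 then -r else r) * sb = r * M := by
    rw [hMdef]
    split_ifs with hsb
    · rw [abs_of_neg hsb]; ring
    · rw [abs_of_nonneg (not_lt.mp hsb)]
  rw [habs, hssb]
  have hq : (1 / (p - 1) : ℝ) = p' - 1 := by rw [hp']; field_simp; ring
  have hMA0 : (0:ℝ) ≤ M / A := by positivity
  have hrM : r * M = A ^ (1 - p') * M ^ p' := by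
    rw [hrdef, Real.div_rpow hM0 hA.le, hq]
    have hM' : M ^ (p' : ℝ) = M ^ (p' - 1 : ℝ) * M := by
      have h := Real.rpow_add' hM0 (show (p' - 1) + 1 ≠ 0 by simpa using hp'0)
      rw [Real.rpow_one] at h
      rw [← h]; congr 1; ring
    have hA' : A ^ ((1 : ℝ) - p') = (A ^ (p' - 1 : ℝ))⁻¹ := by
      rw [show (1 - p' : ℝ) = -(p' - 1) by ring, Real.rpow_neg hA.le]
    rw [hM', hA']
    have hApos : (0:ℝ) < A ^ (p' - 1 : ℝ) := Real.rpow_pos_of_pos hA _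
    field_simp
  have hrp : r ^ (p : ℝ) = M ^ p' * (A ^ (p' : ℝ))⁻¹ := by
    rw [hrdef, ← Real.rpow_mul hMA0, show (1 / (p - 1)) * p = p' by rw [hp']; field_simp,
      Real.div_rpow hM0 hA.le]
    rw [div_eq_mul_inv]
  have hhalf : r ^ (p / 2 : ℝ) * r ^ (p / 2 : ℝ) = r ^ (p : ℝ) := by
    rw [← Real.rpow_add' hr0 (show p / 2 + p / 2 ≠ 0 by simpa using hp0)]
    congr 1; ring
  have hA1 : A ^ ((1:ℝ) - p') = A * (A ^ (p' : ℝ))⁻¹ := by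
    rw [show (1 - p' : ℝ) = 1 + (-p') by ring, Real.rpow_add hA, Real.rpow_one,
      Real.rpow_neg hA.le]
  have hbody : |r| ^ (p:ℝ) + 2 * b * |r| ^ (p/2:ℝ) * |r| ^ (p/2:ℝ) + |r| ^ (p:ℝ)
      = (2 + 2 * b) * r ^ (p:ℝ) := by
    rw [abs_of_nonneg hr0,
      show 2 * b * r ^ (p/2:ℝ) * r ^ (p/2:ℝ) = 2 * b * (r ^ (p/2:ℝ) * r ^ (p/2:ℝ)) by ring,
      hhalf]
    ring
  rw [abs_of_nonneg hr0] at hbody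
  rw [hbody, hrM, hrp, hA1, hp']
  have hApos : (0:ℝ) < A ^ (p' : ℝ) := Real.rpow_pos_of_pos hA _
  field_simp
  ring

/-- the Legendre transform `h` of `f` satisfies
`h(s̄, s̄) = (2/p') (a(1+b))^(1-p') |s̄|^(p')` for every real `s̄`. -/
theorem stmt_10 (p p' a b : ℝ) (hp : 2 < p) (hp' : p' = p / (p - 1)) (ha : 0 < a)
    (hb0 : 0 ≤ b) (hb1 : b ≤ p - 1)
    (h : ℝ → ℝ → ℝ)
    (hh : ∀ sb tb : ℝ, h sb tb = ⨆ st : ℝ × ℝ,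
      (st.1 * sb + st.2 * tb -
        (a / p) * (|st.1| ^ p + 2 * b * |st.1| ^ (p / 2) * |st.2| ^ (p / 2) + |st.2| ^ p)))
    (sb : ℝ) :
    h sb sb = (2 / p') * (a * (1 + b)) ^ (1 - p') * |sb| ^ p' := by
  rw [hh sb sb]
  set C := (2 / p') * (a * (1 + b)) ^ (1 - p') * |sb| ^ p' with hC
  set F : ℝ × ℝ → ℝ := fun st =>
    st.1 * sb + st.2 * sb -
      (a / p) * (|st.1| ^ p + 2 * b * |st.1| ^ (p / 2) * |st.2| ^ (p / 2) + |st.2| ^ p) with hF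
  have hub : ∀ st : ℝ × ℝ, F st ≤ C := fun st =>
    upper_bound hp hp' ha hb0 hb1 sb st.1 st.2
  have hbdd : BddAbove (Set.range F) := ⟨C, by rintro _ ⟨st, rfl⟩; exact hub st⟩
  obtain ⟨s₀, hs₀⟩ := attain (b := b) hp hp' ha hb0 sb
  apply le_antisymm
  · exact ciSup_le hub
  · have : C = F (s₀, s₀) := hs₀.symm
    rw [this]
    exact le_ciSup hbdd (s₀, s₀)
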